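/- Action pruning preserves optimality: for any state s and goal g, the feasible set A_rt(s,g,𝕃) contains every action a that is the first action of some optimal policy from s to g; hence restricting exploration to A_rt never excludes all optimal actions. -/
import Mathlib


/-- Action pruning preserves optimality: every optimal first action lies in the
round-trip feasible set `A_rt(s,g,𝕃)`. -/
theorem pruning_preserves_optimality {S A : Type*} (𝕃 : Finset S)
    (h : S → S → ℝ) (q : S → S → A → ℝ)
    (h_nonneg : ∀ x y, 0 ≤ h x y)
    (h_refl : ∀ x, h x x = 0)
    (h_tri : ∀ x y z, h x z ≤ h x y + h y z)
    (s g : S) (η : ℝ) (hη : 0 < η)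
    (hW : ∃ ℓ ∈ 𝕃, h g ℓ + h ℓ g ≤ η)
    (a : A)
    (h_opt : ∀ ℓ ∈ 𝕃, q ℓ s a ≤ h s g + h g ℓ) :
    a ∈ {a : A | ∀ ℓ ∈ 𝕃, h g ℓ + h ℓ g ≤ η → q ℓ s a ≤ h s ℓ + η} := by
  intro ℓ hℓ hrt
  have h1 := h_opt ℓ hℓ
  have h2 := h_tri s ℓ g
  linarith
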